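/- arXiv:0912.4017 — 2 statements merged into one kernel-verified Lean document; each statement's English description precedes it below -/
import Mathlib

section
/- Let L/K be a field extension (not necessarily algebraic). If L is quasi-galois over K (i.e., for every intermediate field K ⊆ F ⊆ L, every irreducible polynomial in F[X] with a root in L splits into linear factors in L[X]) and L is a finitely generated, separably generated extension of K, then L is Galois over K, i.e., the fixed field of the automorphism group Aut(L/K) is exactly K. -/
open Polynomial IntermediateField

section Helpers

variable {L : Type*} [Field L]

lemma isAlgebraic_of_poly' {F : Type*} [CommRing F] [Algebra F L] {t : L} (P : L[X])
    (hP : P ≠ 0) (hc : ∀ i, P.coeff i ∈ Set.range (algebraMap F L))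
    (he : Polynomial.eval t P = 0) : IsAlgebraic F t := by
  obtain ⟨q, hq⟩ := (Polynomial.mem_lifts _).1 ((Polynomial.lifts_iff_coeff_lifts P).2 hc)
  refine ⟨q, fun h0 => hP ?_, ?_⟩
  · rw [← hq, h0, Polynomial.map_zero]
  · rw [Polynomial.aeval_def, ← Polynomial.eval_map, hq, he]

lemma exists_poly_of_isAlgebraic' {F : Type*} [Field F] [Algebra F L] {t : L}
    (h : IsAlgebraic F t) : ∃ P : L[X], P ≠ 0 ∧ (∀ i, P.coeff i ∈ Set.range (algebraMap F L))
      ∧ Polynomial.eval t P = 0 := by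
  obtain ⟨p, hp, he⟩ := h
  refine ⟨p.map (algebraMap F L), ?_, fun i => ?_, ?_⟩
  · simpa [Polynomial.map_eq_zero] using hp
  · rw [Polynomial.coeff_map]; exact ⟨_, rfl⟩
  · rw [Polynomial.eval_map, ← Polynomial.aeval_def, he]

lemma mem_range_algebraMap_iff_mem_subalgebra {K : Type*} [Field K] [Algebra K L]
    {A : Subalgebra K L} {x : L} :
    x ∈ Set.range (algebraMap ↥A L) ↔ x ∈ A := by
  constructor
  · rintro ⟨y, rfl⟩; exact y.2
  · intro h; exact ⟨⟨x, h⟩, rfl⟩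

lemma mem_range_algebraMap_iff_mem' {K : Type*} [Field K] [Algebra K L]
    {E : IntermediateField K L} {x : L} :
    x ∈ Set.range (algebraMap ↥E L) ↔ x ∈ E := by
  constructor
  · rintro ⟨y, rfl⟩; exact y.2
  · intro h; exact ⟨⟨x, h⟩, rfl⟩

lemma Transcendental.mono' {K : Type*} [Field K] [Algebra K L]
    {E₁ E₂ : IntermediateField K L} (h : E₁ ≤ E₂) {t : L}
    (ht : Transcendental ↥E₂ t) : Transcendental ↥E₁ t := by
  intro halg
  obtain ⟨P, h0, hc, he⟩ := exists_poly_of_isAlgebraic' halg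
  exact ht (isAlgebraic_of_poly' P h0
    (fun i => mem_range_algebraMap_iff_mem'.2 (h (mem_range_algebraMap_iff_mem'.1 (hc i)))) he)

lemma IsAlgebraic.mono' {K : Type*} [Field K] [Algebra K L]
    {E₁ E₂ : IntermediateField K L} (h : E₁ ≤ E₂) {t : L}
    (ha : IsAlgebraic ↥E₁ t) : IsAlgebraic ↥E₂ t := by
  obtain ⟨P, h0, hc, he⟩ := exists_poly_of_isAlgebraic' ha
  exact isAlgebraic_of_poly' P h0
    (fun i => mem_range_algebraMap_iff_mem'.2 (h (mem_range_algebraMap_iff_mem'.1 (hc i)))) he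

lemma exists_rep_adjoin_simple' {F : Type*} [Field F] [Algebra F L] {u x : L}
    (hx : x ∈ IntermediateField.adjoin F {u}) :
    ∃ p q : F[X], Polynomial.aeval u q ≠ 0 ∧ x * Polynomial.aeval u q = Polynomial.aeval u p := by
  obtain ⟨p, q, rfl⟩ := (IntermediateField.mem_adjoin_simple_iff F x).1 hx
  by_cases hq : Polynomial.aeval u q = 0
  · exact ⟨0, 1, by simp, by simp [hq]⟩
  · exact ⟨p, q, hq, by field_simp⟩

lemma coeffs_zero_of_sum_pow' {F : Type*} [Field F] [Algebra F L] {t : L}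
    (ht : Transcendental F t) {n : ℕ} (hn : 0 < n) (g : Fin n → L)
    (hg : ∀ i, g i ∈ IntermediateField.adjoin F {t ^ n})
    (hsum : ∑ i, g i * t ^ (i : ℕ) = 0) : ∀ i, g i = 0 := by
  classical
  choose p q hq hx using fun i => exists_rep_adjoin_simple' (hg i)
  set u := t ^ n with hu
  set b : Fin n → F[X] := fun i => p i * ∏ j ∈ Finset.univ.erase i, q j with hb
  have hbev : ∀ i, Polynomial.aeval u (b i) = g i * ∏ j, Polynomial.aeval u (q j) := by
    intro i
    have h1 : (∏ j, Polynomial.aeval u (q j))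
        = Polynomial.aeval u (q i) * ∏ j ∈ Finset.univ.erase i, Polynomial.aeval u (q j) :=
      (Finset.mul_prod_erase _ _ (Finset.mem_univ i)).symm
    rw [hb]
    simp only [map_mul, map_prod]
    rw [h1, ← hx i]
    ring
  set P : F[X] := ∑ i : Fin n, (Polynomial.expand F n (b i)) * X ^ (i : ℕ) with hP
  have hevP : Polynomial.aeval t P = 0 := by
    rw [hP]
    simp only [map_sum, map_mul, map_pow, Polynomial.aeval_X, Polynomial.expand_aeval]
    calc ∑ i : Fin n, Polynomial.aeval (t ^ n) (b i) * t ^ (i : ℕ)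
        = ∑ i : Fin n, (g i * ∏ j, Polynomial.aeval u (q j)) * t ^ (i : ℕ) := by
          refine Finset.sum_congr rfl fun i _ => ?_; rw [← hbev i, hu]
      _ = (∏ j, Polynomial.aeval u (q j)) * ∑ i : Fin n, g i * t ^ (i : ℕ) := by
          rw [Finset.mul_sum]; refine Finset.sum_congr rfl fun i _ => by ring
      _ = 0 := by rw [hsum, mul_zero]
  have hP0 : P = 0 := by
    by_contra h
    exact ht ⟨P, h, hevP⟩
  have hbz : ∀ i, b i = 0 := by
    intro i
    ext k
    have h1 : P.coeff (n * k + (i : ℕ)) = (b i).coeff k := by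
      rw [hP, Polynomial.finset_sum_coeff]
      rw [Finset.sum_eq_single i]
      · rw [Polynomial.coeff_mul_X_pow', if_pos (Nat.le_add_left _ _), Nat.add_sub_cancel,
          Polynomial.coeff_expand hn, if_pos (dvd_mul_right n k),
          Nat.mul_div_cancel_left k hn]
      · intro j _ hj
        rw [Polynomial.coeff_mul_X_pow']
        split_ifs with hle
        · rw [Polynomial.coeff_expand hn, if_neg]
          intro hdvd
          obtain ⟨c, hc⟩ := hdvd
          have he : n * c + (j : ℕ) = n * k + (i : ℕ) := by omega
          have : (j : ℕ) % n = (i : ℕ) % n := by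
            rw [← Nat.mul_add_mod n c (j : ℕ), he, Nat.mul_add_mod]
          apply hj
          exact Fin.ext (by rwa [Nat.mod_eq_of_lt j.2, Nat.mod_eq_of_lt i.2] at this)
        · rfl
      · intro h; exact absurd (Finset.mem_univ i) h
    rw [hP0] at h1
    simpa using h1.symm
  intro i
  have h2 := hbev i
  rw [hbz i, map_zero] at h2
  have h3 : (∏ j, Polynomial.aeval u (q j)) ≠ 0 := Finset.prod_ne_zero_iff.2 fun j _ => hq j
  rcases mul_eq_zero.1 h2.symm with h | h
  · exact h
  · exact absurd h h3

set_option synthInstance.maxHeartbeats 400000 in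
lemma mem_bot_of_mem_adjoin_powers {F : Type*} [Field F] [Algebra F L] {t x : L}
    (ht : Transcendental F t)
    (h : ∀ N : ℕ, ∃ n, N < n ∧ x ∈ IntermediateField.adjoin F {t ^ n}) :
    x ∈ (⊥ : IntermediateField F L) := by
  by_contra hx
  obtain ⟨n₀, hn₀, hxn₀⟩ := h 0
  have hxt : x ∈ IntermediateField.adjoin F {t} :=
    IntermediateField.adjoin_simple_le_iff.2
      (pow_mem (IntermediateField.mem_adjoin_simple_self F t) n₀) hxn₀
  obtain ⟨p, q, hq, hpq⟩ := exists_rep_adjoin_simple' hxt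
  have halg : IsAlgebraic ↥(IntermediateField.adjoin F {x}) t := by
    refine isAlgebraic_of_poly'
      (P := p.map (algebraMap F L) - C x * q.map (algebraMap F L)) ?_ ?_ ?_
    · intro h0
      rw [sub_eq_zero] at h0
      have hc : ∀ i, algebraMap F L (p.coeff i) = x * algebraMap F L (q.coeff i) := by
        intro i
        have h2 := congrArg (fun r => Polynomial.coeff r i) h0
        simpa [Polynomial.coeff_map, Polynomial.coeff_C_mul] using h2
      have hq0 : q ≠ 0 := fun h => hq (by simp [h])
      obtain ⟨i, hi⟩ : ∃ i, q.coeff i ≠ 0 := by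
        by_contra hall
        push_neg at hall
        exact hq0 (Polynomial.ext fun i => by simp [hall i])
      apply hx
      rw [IntermediateField.mem_bot]
      refine ⟨p.coeff i / q.coeff i, ?_⟩
      rw [map_div₀, hc i]
      have : algebraMap F L (q.coeff i) ≠ 0 := by
        simpa using hi
      field_simp
    · intro i
      rw [mem_range_algebraMap_iff_mem']
      simp only [Polynomial.coeff_sub, Polynomial.coeff_map, Polynomial.coeff_C_mul]
      exact sub_mem (IntermediateField.algebraMap_mem _ _)
        (mul_mem (IntermediateField.mem_adjoin_simple_self F x)
          (IntermediateField.algebraMap_mem _ _))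
    · simp only [Polynomial.eval_sub, Polynomial.eval_mul, Polynomial.eval_C,
        Polynomial.eval_map, ← Polynomial.aeval_def]
      rw [← hpq]; ring
  have hint : IsIntegral ↥(IntermediateField.adjoin F {x}) t := halg.isIntegral
  haveI hfd : FiniteDimensional ↥(IntermediateField.adjoin F {x})
      ↥(IntermediateField.adjoin ↥(IntermediateField.adjoin F {x}) {t}) :=
    IntermediateField.adjoin.finiteDimensional hint
  set Fx := IntermediateField.adjoin F {x}
  set T := IntermediateField.adjoin ↥Fx {t} with hT
  set d := Module.finrank ↥Fx ↥T with hd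
  obtain ⟨n, hnd, hxn⟩ := h d
  have hn : 0 < n := by omega
  have hmem : ∀ i : Fin n, t ^ (i : ℕ) ∈ T :=
    fun i => pow_mem (IntermediateField.mem_adjoin_simple_self _ t) _
  set v : Fin n → ↥T := fun i => ⟨t ^ (i : ℕ), hmem i⟩ with hv
  have hle : Fx ≤ IntermediateField.adjoin F {t ^ n} :=
    IntermediateField.adjoin_simple_le_iff.2 hxn
  have hli : LinearIndependent ↥Fx v := by
    rw [Fintype.linearIndependent_iff]
    intro c hc i
    have e1 : ∀ j, ((c j • v j : ↥T) : L) = (c j : L) * t ^ (j : ℕ) := fun j => by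
      rw [Algebra.smul_def]; push_cast; rfl
    have hsum : ∑ j : Fin n, ((c j : L) * t ^ (j : ℕ)) = 0 := by
      have h2 : ((∑ j, c j • v j : ↥T) : L) = 0 := by rw [hc]; rfl
      have h3 : ((∑ j, c j • v j : ↥T) : L) = ∑ j, ((c j • v j : ↥T) : L) := by
        exact_mod_cast rfl
      rw [h3] at h2
      rw [← h2]
      exact Finset.sum_congr rfl fun j _ => (e1 j).symm
    have hz := coeffs_zero_of_sum_pow' ht hn (fun j => (c j : L))
      (fun j => hle (c j).2) hsum i
    exact_mod_cast hz
  have hcard := hli.fintype_card_le_finrank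
  rw [Fintype.card_fin] at hcard
  omega

lemma exists_rep_adjoin {K : Type*} [Field K] [Algebra K L] {S : Set L} {z : L}
    (hz : z ∈ IntermediateField.adjoin K S) :
    ∃ a b : L, a ∈ Algebra.adjoin K S ∧ b ∈ Algebra.adjoin K S ∧ b ≠ 0 ∧ z * b = a := by
  have hmem : ∀ w : MvPolynomial S K,
      MvPolynomial.aeval (Subtype.val : S → L) w ∈ Algebra.adjoin K S := by
    intro w
    have h1 : Algebra.adjoin K S = (MvPolynomial.aeval (Subtype.val : S → L)).range := by
      rw [← Algebra.adjoin_range_eq_range_aeval, Subtype.range_coe]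
    rw [h1]
    exact ⟨w, rfl⟩
  obtain ⟨r, s, rfl⟩ := (IntermediateField.mem_adjoin_iff K z).1 hz
  by_cases hs : MvPolynomial.aeval (Subtype.val : S → L) s = 0
  · exact ⟨0, 1, zero_mem _, one_mem _, one_ne_zero, by simp [hs]⟩
  · exact ⟨_, _, hmem r, hmem s, hs, by field_simp⟩

lemma transcendental_adjoin_field {K : Type*} [Field K] [Algebra K L] {S : Set L} {t : L}
    (h : Transcendental (Algebra.adjoin K S) t) :
    Transcendental ↥(IntermediateField.adjoin K S) t := by
  classical
  intro halg
  apply h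
  obtain ⟨P, h0, hc, he⟩ := exists_poly_of_isAlgebraic' halg
  have hc' : ∀ i, P.coeff i ∈ IntermediateField.adjoin K S :=
    fun i => mem_range_algebraMap_iff_mem'.1 (hc i)
  choose a b ha hb hbne hab using fun i => exists_rep_adjoin (hc' i)
  set B : L := ∏ i ∈ P.support, b i with hB
  have hBne : B ≠ 0 := Finset.prod_ne_zero_iff.2 fun i _ => hbne i
  refine isAlgebraic_of_poly' (F := ↥(Algebra.adjoin K S)) (P * C B)
    (mul_ne_zero h0 (by simpa using hBne)) ?_ ?_
  · intro i
    rw [mem_range_algebraMap_iff_mem_subalgebra, Polynomial.coeff_mul_C]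
    by_cases hi : i ∈ P.support
    · have h1 : P.coeff i * B = a i * ∏ j ∈ P.support.erase i, b j := by
        rw [hB, ← Finset.mul_prod_erase _ _ hi, ← mul_assoc, hab i]
      rw [h1]
      exact mul_mem (ha i) (prod_mem fun j _ => hb j)
    · rw [Polynomial.notMem_support_iff.1 hi, zero_mul]
      exact zero_mem _
  · rw [Polynomial.eval_mul, he, zero_mul]

lemma transcendental_of_basis {K : Type*} [Field K] [Algebra K L] {Δ : Set L}
    (hΔ : AlgebraicIndependent K ((↑) : Δ → L)) {t : L} (ht : t ∈ Δ) :
    Transcendental ↥(IntermediateField.adjoin K (Δ \ {t})) t := by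
  apply transcendental_adjoin_field
  have h1 : AlgebraicIndependent K ((↑) : ↥(Δ \ {t}) → L) := by
    have := hΔ.comp (Set.inclusion (Set.diff_subset (s := Δ) (t := {t})))
      (Set.inclusion_injective _)
    exact this
  have h2 : AlgebraicIndependent K
      (fun o : Option ↥(Δ \ {t}) => o.elim t ((↑) : ↥(Δ \ {t}) → L)) := by
    let f : Option ↥(Δ \ {t}) → ↥Δ := fun o => o.elim ⟨t, ht⟩ (fun y => ⟨y.1, y.2.1⟩)
    have hf : Function.Injective f := by
      rintro (_ | y) (_ | z) hyz <;>
        simp only [f, Option.elim, Subtype.mk.injEq] at hyz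
      · rfl
      · exact absurd hyz.symm z.2.2
      · exact absurd hyz y.2.2
      · exact congrArg some (Subtype.ext hyz)
    have h3 := hΔ.comp f hf
    convert h3 using 1
    funext o
    cases o <;> rfl
  have h3 := (h1.option_iff_transcendental t).1 h2
  rwa [Subtype.range_coe] at h3

/-- find arbitrarily large `q` with nonzero image in `L` -/
lemma exists_good_nat (L : Type*) [Field L] (N : ℕ) :
    ∃ q : ℕ, N < q ∧ 0 < q ∧ (q : L) ≠ 0 := by
  obtain ⟨p, hp⟩ := CharP.exists L
  rcases CharP.char_is_prime_or_zero L p with hpp | hp0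
  · refine ⟨p * N + 1, ?_, by omega, ?_⟩
    · have := hpp.two_le; nlinarith
    · rw [Ne, CharP.cast_eq_zero_iff L p]
      intro hdvd
      have : p ∣ 1 := (Nat.dvd_add_right ⟨N, rfl⟩).1 hdvd
      exact hpp.one_lt.ne' (Nat.dvd_one.1 this)
  · subst hp0
    haveI : CharZero L := CharP.charP_to_charZero L
    exact ⟨N + 1, by omega, by omega, Nat.cast_ne_zero.2 (by omega)⟩

end Helpers

section Main

variable {K L : Type*} [Field K] [Field L] [Algebra K L]

/-- The Galois-theoretic step. -/
lemma mem_of_fixed_galois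
    (hqg : ∀ (F : IntermediateField K L) (f : Polynomial F), Irreducible f →
      (∃ x : L, Polynomial.aeval x f = 0) → (f.map (algebraMap F L)).Splits)
    (F : IntermediateField K L) [FiniteDimensional ↥F L] [Algebra.IsSeparable ↥F L]
    {x : L} (hx : ∀ σ : L ≃ₐ[K] L, σ x = x) : x ∈ F := by
  haveI : Normal ↥F L := by
    rw [normal_iff]
    intro y
    have hyi : IsIntegral ↥F y := Algebra.IsSeparable.isIntegral ↥F y
    exact ⟨hyi, hqg F (minpoly ↥F y) (minpoly.irreducible hyi) ⟨y, minpoly.aeval _ _⟩⟩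
  haveI : IsGalois ↥F L := ⟨⟩
  have h1 : IntermediateField.fixedField (⊤ : Subgroup (L ≃ₐ[↥F] L)) = ⊥ := by
    rw [← IntermediateField.fixingSubgroup_bot (F := ↥F) (E := L)]
    exact IsGalois.fixedField_fixingSubgroup ⊥
  have h2 : x ∈ IntermediateField.fixedField (⊤ : Subgroup (L ≃ₐ[↥F] L)) := by
    intro σ
    exact hx ((σ : L ≃ₐ[↥F] L).restrictScalars K)
  rw [h1, IntermediateField.mem_bot] at h2
  exact mem_range_algebraMap_iff_mem'.1 h2

/-- finite dimensionality from fg + algebraic -/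
lemma fd_of_fg_algebraic (S : Finset L) (hS : IntermediateField.adjoin K (↑S : Set L) = ⊤)
    (E : IntermediateField K L) [Algebra.IsAlgebraic ↥E L] : FiniteDimensional ↥E L := by
  have htop : IntermediateField.adjoin ↥E (↑S : Set L) = ⊤ := by
    rw [eq_top_iff]
    intro z _
    have h1 : (IntermediateField.adjoin K (↑S : Set L)) ≤
        (IntermediateField.adjoin ↥E (↑S : Set L)).restrictScalars K :=
      IntermediateField.adjoin_le_iff.2 (fun s hs =>
        (IntermediateField.mem_restrictScalars _).2 (IntermediateField.subset_adjoin _ _ hs))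
    have h2 : z ∈ IntermediateField.adjoin K (↑S : Set L) := by rw [hS]; trivial
    exact (IntermediateField.mem_restrictScalars _).1 (h1 h2)
  haveI : FiniteDimensional ↥E ↥(IntermediateField.adjoin ↥E (↑S : Set L)) :=
    IntermediateField.finiteDimensional_adjoin
      (fun s _ => (Algebra.IsAlgebraic.isAlgebraic (R := ↥E) s).isIntegral)
  rw [htop] at this
  exact Module.Finite.equiv IntermediateField.topEquiv.toLinearEquiv

/-- the transcendence basis is finite -/
lemma basis_finite {Δ : Set L} (hΔ : AlgebraicIndependent K ((↑) : Δ → L))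
    (S : Finset L) (hS : IntermediateField.adjoin K (↑S : Set L) = ⊤)
    [halg : Algebra.IsAlgebraic ↥(IntermediateField.adjoin K Δ) L] : Δ.Finite := by
  classical
  have h1 : ∀ s : L, ∃ T : Finset L, ↑T ⊆ Δ ∧
      IsAlgebraic ↥(IntermediateField.adjoin K (↑T : Set L)) s := by
    intro s
    obtain ⟨P, h0, hc, he⟩ := exists_poly_of_isAlgebraic'
      (Algebra.IsAlgebraic.isAlgebraic (R := ↥(IntermediateField.adjoin K Δ)) s)
    have hc' : ∀ i, P.coeff i ∈ IntermediateField.adjoin K Δ :=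
      fun i => mem_range_algebraMap_iff_mem'.1 (hc i)
    choose T hT hmem using fun i : ℕ => IntermediateField.exists_finset_of_mem_adjoin (hc' i)
    refine ⟨P.support.biUnion T, ?_, ?_⟩
    · intro y hy
      simp only [Finset.coe_biUnion, Set.mem_iUnion] at hy
      obtain ⟨i, _, hyi⟩ := hy
      exact hT i hyi
    · refine isAlgebraic_of_poly' P h0 (fun i => ?_) he
      rw [mem_range_algebraMap_iff_mem']
      by_cases hi : i ∈ P.support
      · refine IntermediateField.adjoin.mono K _ _ ?_ (hmem i)
        intro y hy
        simp only [Finset.coe_biUnion, Set.mem_iUnion]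
        exact ⟨i, hi, hy⟩
      · rw [Polynomial.notMem_support_iff.1 hi]
        exact zero_mem _
  choose T hTsub hTalg using h1
  set T0 : Finset L := S.biUnion T with hT0
  have hT0sub : ↑T0 ⊆ Δ := by
    intro y hy
    simp only [hT0, Finset.coe_biUnion, Set.mem_iUnion] at hy
    obtain ⟨s, _, hys⟩ := hy
    exact hTsub s hys
  haveI halgT0 : Algebra.IsAlgebraic ↥(IntermediateField.adjoin K (↑T0 : Set L)) L := by
    set E := IntermediateField.adjoin K (↑T0 : Set L) with hE
    have hsalg : ∀ s ∈ S, IsIntegral ↥E s := by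
      intro s hs
      refine (IsAlgebraic.mono' ?_ (hTalg s)).isIntegral
      exact IntermediateField.adjoin.mono K _ _ (fun y hy => by
        simp only [hT0, Finset.coe_biUnion, Set.mem_iUnion]; exact ⟨s, hs, hy⟩)
    have htop : IntermediateField.adjoin ↥E (↑S : Set L) = ⊤ := by
      rw [eq_top_iff]
      intro z _
      have h1 : (IntermediateField.adjoin K (↑S : Set L)) ≤
          (IntermediateField.adjoin ↥E (↑S : Set L)).restrictScalars K :=
        IntermediateField.adjoin_le_iff.2 (fun s hs =>
          (IntermediateField.mem_restrictScalars _).2 (IntermediateField.subset_adjoin _ _ hs))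
      have h2 : z ∈ IntermediateField.adjoin K (↑S : Set L) := by rw [hS]; trivial
      exact (IntermediateField.mem_restrictScalars _).1 (h1 h2)
    haveI h3 : Algebra.IsAlgebraic ↥E ↥(IntermediateField.adjoin ↥E (↑S : Set L)) :=
      IntermediateField.isAlgebraic_adjoin (fun s hs => hsalg s hs)
    constructor
    intro z
    have hz : z ∈ IntermediateField.adjoin ↥E (↑S : Set L) := by rw [htop]; trivial
    have := Algebra.IsAlgebraic.isAlgebraic
      (R := ↥E) (⟨z, hz⟩ : ↥(IntermediateField.adjoin ↥E (↑S : Set L)))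
    exact (IntermediateField.isAlgebraic_iff).1 this
  have hsub : Δ ⊆ ↑T0 := by
    intro u hu
    by_contra hun
    have h2 : IsAlgebraic ↥(IntermediateField.adjoin K (Δ \ {u})) u := by
      refine IsAlgebraic.mono' ?_
        (Algebra.IsAlgebraic.isAlgebraic (R := ↥(IntermediateField.adjoin K (↑T0 : Set L))) u)
      exact IntermediateField.adjoin.mono K _ _
        (fun y hy => ⟨hT0sub hy, fun h => hun (by rwa [Set.mem_singleton_iff.1 h] at hy)⟩)
    exact transcendental_of_basis hΔ hu h2
  exact Set.Finite.subset T0.finite_toSet hsub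

end Main

/-- If `L/K` is a finitely generated, separably generated field extension
that is quasi-galois over `K`, then `L` is Galois over `K` in the generalized sense:
the fixed field of `Aut(L/K)` is exactly `K`. -/
theorem quasiGalois_separablyGenerated_implies_galois
    {K L : Type*} [Field K] [Field L] [Algebra K L]
    -- L is finitely generated over K
    (hfg : (⊤ : IntermediateField K L).FG)
    -- L is quasi-galois over K: for every intermediate field F and every irreducible
    -- polynomial over F with a root in L, the polynomial splits in L
    (hqg : ∀ (F : IntermediateField K L) (f : Polynomial F), Irreducible f →
      (∃ x : L, Polynomial.aeval x f = 0) → (f.map (algebraMap F L)).Splits)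
    -- L is separably generated over K
    (hsg : ∃ Δ : Set L, IsTranscendenceBasis K ((↑) : Δ → L) ∧
      Algebra.IsSeparable (IntermediateField.adjoin K Δ) L) :
    IntermediateField.fixedField (⊤ : Subgroup (L ≃ₐ[K] L)) = ⊥ := by
  classical
  obtain ⟨Δ, hΔ, hsep⟩ := hsg
  obtain ⟨S, hS⟩ := hfg
  haveI := hsep
  haveI halgF : Algebra.IsAlgebraic ↥(IntermediateField.adjoin K Δ) L :=
    Algebra.IsSeparable.isAlgebraic _ _
  haveI hFDF : FiniteDimensional ↥(IntermediateField.adjoin K Δ) L :=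
    fd_of_fg_algebraic S hS _
  have hΔfin : Δ.Finite := basis_finite hΔ.1 S hS
  haveI : Finite ↥Δ := hΔfin.to_subtype
  refine le_antisymm ?_ bot_le
  intro x hxf
  have hx : ∀ σ : L ≃ₐ[K] L, σ x = x := fun σ => hxf ⟨σ, trivial⟩
  -- Galois memberships for the "fully powered" fields
  have hbase : ∀ n : ℕ, 0 < n → (n : L) ≠ 0 →
      x ∈ IntermediateField.adjoin K ((fun y => y ^ n) '' Δ) := by
    intro n hn hnL
    set G := IntermediateField.adjoin K ((fun y => y ^ n) '' Δ) with hG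
    have hGF : G ≤ IntermediateField.adjoin K Δ := IntermediateField.adjoin_le_iff.2 (by
      rintro _ ⟨y, hy, rfl⟩
      exact pow_mem (IntermediateField.subset_adjoin K Δ hy) n)
    set E := IntermediateField.adjoin ↥G Δ with hE
    have hres : E.restrictScalars K = IntermediateField.adjoin K Δ := by
      rw [hE, IntermediateField.restrictScalars_adjoin_eq_sup, sup_eq_right.2 hGF]
    haveI hsepE : Algebra.IsSeparable ↥E L := by
      have h' := hsep
      rw [← hres] at h'
      exact h'
    haveI hfdE : FiniteDimensional ↥E L := by
      have h' := hFDF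
      rw [← hres] at h'
      exact h'
    haveI hsepGE : Algebra.IsSeparable ↥G ↥E := by
      rw [hE]
      refine (IntermediateField.isSeparable_adjoin_iff_isSeparable _ _).2 ?_
      intro y hy
      have hy0 : y ≠ 0 := by
        intro h0
        have htr : Transcendental ↥(IntermediateField.adjoin K (Δ \ {y})) y :=
          transcendental_of_basis hΔ.1 hy
        exact htr (h0 ▸ isAlgebraic_zero)
      have hmem : y ^ n ∈ G := IntermediateField.subset_adjoin _ _ ⟨y, hy, rfl⟩
      have hsepP : (X ^ n - C (⟨y ^ n, hmem⟩ : ↥G)).Separable := by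
        refine Polynomial.separable_X_pow_sub_C _ ?_ ?_
        · intro hcast
          apply hnL
          have := congrArg (algebraMap ↥G L) hcast
          push_cast at this
          simpa using this
        · intro hzero
          exact pow_ne_zero n hy0 (congrArg Subtype.val hzero)
      have hdvd : minpoly ↥G y ∣ X ^ n - C (⟨y ^ n, hmem⟩ : ↥G) := by
        apply minpoly.dvd
        have : algebraMap ↥G L ⟨y ^ n, hmem⟩ = y ^ n := rfl
        simp [this]
      exact hsepP.of_dvd hdvd
    haveI hfdGE : FiniteDimensional ↥G ↥E := by
      rw [hE]
      refine IntermediateField.finiteDimensional_adjoin ?_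
      intro y hy
      have hmem : y ^ n ∈ G := IntermediateField.subset_adjoin _ _ ⟨y, hy, rfl⟩
      refine ⟨X ^ n - C (⟨y ^ n, hmem⟩ : ↥G), Polynomial.monic_X_pow_sub_C _ (by omega), ?_⟩
      have : algebraMap ↥G L ⟨y ^ n, hmem⟩ = y ^ n := rfl
      simp [Polynomial.eval₂_sub, this]
    haveI : Algebra.IsSeparable ↥G L := Algebra.IsSeparable.trans ↥G ↥E L
    haveI : FiniteDimensional ↥G L := FiniteDimensional.trans ↥G ↥E L
    exact mem_of_fixed_galois hqg G hx
  -- downward induction removing basis elements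
  have hQ : ∀ R : Finset L, ↑R ⊆ Δ → ∀ n : ℕ, 0 < n → (n : L) ≠ 0 →
      x ∈ IntermediateField.adjoin K ((fun y => y ^ n) '' (Δ \ ↑R)) := by
    intro R
    induction R using Finset.induction_on with
    | empty =>
      intro _ n hn hnL
      simpa using hbase n hn hnL
    | @insert t R' htR' ih =>
      intro hsub n hn hnL
      have htΔ : t ∈ Δ := hsub (Finset.mem_insert_self t R')
      have hR'Δ : ↑R' ⊆ Δ := fun y hy => hsub (Finset.mem_insert_of_mem hy)
      set M := IntermediateField.adjoin K ((fun y => y ^ n) '' (Δ \ ↑(insert t R'))) with hM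
      have hMle : M ≤ IntermediateField.adjoin K (Δ \ {t}) := by
        rw [hM]
        refine IntermediateField.adjoin_le_iff.2 ?_
        rintro _ ⟨y, hy, rfl⟩
        have hyd : y ∈ Δ \ {t} := ⟨hy.1, fun h => hy.2 (by
          rw [Set.mem_singleton_iff.1 h]
          exact Finset.mem_coe.2 (Finset.mem_insert_self t R'))⟩
        exact pow_mem (IntermediateField.subset_adjoin K (Δ \ {t}) hyd) n
      have htr : Transcendental ↥M (t ^ n) :=
        Transcendental.pow (Transcendental.mono' hMle (transcendental_of_basis hΔ.1 htΔ)) hn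
      have hxM : x ∈ (⊥ : IntermediateField ↥M L) := by
        refine mem_bot_of_mem_adjoin_powers htr ?_
        intro N
        obtain ⟨q, hqN, hq0, hqL⟩ := exists_good_nat L N
        refine ⟨q, hqN, ?_⟩
        have hx2 := ih hR'Δ (n * q) (by positivity) (by push_cast; exact mul_ne_zero hnL hqL)
        have hle : IntermediateField.adjoin K ((fun y => y ^ (n * q)) '' (Δ \ ↑R')) ≤
            (IntermediateField.adjoin ↥M {(t ^ n) ^ q}).restrictScalars K := by
          refine IntermediateField.adjoin_le_iff.2 ?_
          rintro _ ⟨y, hy, rfl⟩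
          have goal' : y ^ (n * q) ∈ IntermediateField.adjoin ↥M {(t ^ n) ^ q} := by
            by_cases hyt : y = t
            · subst hyt
              rw [pow_mul]
              exact IntermediateField.mem_adjoin_simple_self _ _
            · have h1 : y ^ n ∈ M := by
                rw [hM]
                refine IntermediateField.subset_adjoin _ _ ⟨y, ⟨hy.1, ?_⟩, rfl⟩
                intro hins
                rcases Finset.mem_insert.1 hins with h | h
                · exact hyt h
                · exact hy.2 h
              have h2 : y ^ n ∈ IntermediateField.adjoin ↥M {(t ^ n) ^ q} :=
                IntermediateField.algebraMap_mem _ (⟨y ^ n, h1⟩ : ↥M)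
              rw [pow_mul]
              exact pow_mem h2 q
          exact (IntermediateField.mem_restrictScalars _).2 goal'
        exact hle hx2
      rw [IntermediateField.mem_bot] at hxM
      exact mem_range_algebraMap_iff_mem'.1 hxM
  have hfinal := hQ hΔfin.toFinset (by simp) 1 one_pos (by simp)
  have hempty : Δ \ ↑hΔfin.toFinset = ∅ := by simp
  rw [hempty, Set.image_empty, IntermediateField.adjoin_empty] at hfinal
  exact hfinal
end

section
/- Let L/K be a field extension. If every K-conjugation of L (i.e., the image of every K-embedding-type isomorphism onto a subfield of an algebraic closure fixing a transcendence basis setup) is contained in L, then for every element x ∈ L algebraic over an intermediate field F with K ⊆ F ⊆ L, every F-conjugate of x lies in L. -/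
open IntermediateField Polynomial

section Helpers

/-- Push algebraicity along a set-theoretic inclusion of coefficient rings inside `Ω`. -/
lemma pushAlg {Ω : Type*} [Field Ω] {A B' : Type*} [CommRing A] [Field B']
    [Algebra A Ω] [Algebra B' Ω] (hinj : Function.Injective (algebraMap A Ω))
    (hsub : ∀ a : A, ∃ b : B', algebraMap B' Ω b = algebraMap A Ω a)
    {z : Ω} (h : IsAlgebraic A z) : IsAlgebraic B' z := by
  have hinjB : Function.Injective (algebraMap B' Ω) := (algebraMap B' Ω).injective
  choose jf hjf using hsub
  have hadd : ∀ a b, jf (a + b) = jf a + jf b := fun a b =>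
    hinjB (by rw [hjf, map_add, map_add, hjf, hjf])
  have hmul : ∀ a b, jf (a * b) = jf a * jf b := fun a b =>
    hinjB (by rw [hjf, map_mul, map_mul, hjf, hjf])
  let j : A →+* B' :=
    { toFun := jf
      map_one' := hinjB (by rw [hjf, map_one, map_one])
      map_mul' := hmul
      map_zero' := hinjB (by rw [hjf, map_zero, map_zero])
      map_add' := hadd }
  have hjinj : Function.Injective j := fun a b hab => hinj (by rw [← hjf, ← hjf]; exact congrArg _ hab)
  obtain ⟨p, hp0, hpz⟩ := h
  refine ⟨p.map j, fun h0 => hp0 ((Polynomial.map_eq_zero_iff hjinj).mp h0), ?_⟩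
  have hcomp : (algebraMap B' Ω).comp j = algebraMap A Ω := RingHom.ext fun a => hjf a
  rw [Polynomial.aeval_def, Polynomial.eval₂_map, hcomp, ← Polynomial.aeval_def]
  exact hpz

/-- Transitivity: algebraic over a field generated by elements algebraic over `F₀`
implies algebraic over `F₀`. -/
lemma algTrans {F₀ Ω : Type*} [Field F₀] [Field Ω] [Algebra F₀ Ω] {T : Set Ω}
    (hT : ∀ t ∈ T, IsIntegral F₀ t) {z : Ω}
    (hz : IsAlgebraic (IntermediateField.adjoin F₀ T) z) : IsAlgebraic F₀ z := by
  haveI : Algebra.IsAlgebraic F₀ (IntermediateField.adjoin F₀ T) :=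
    IntermediateField.isAlgebraic_adjoin hT
  haveI : Algebra.IsIntegral F₀ (IntermediateField.adjoin F₀ T) :=
    Algebra.IsAlgebraic.isIntegral
  exact (isIntegral_trans z hz.isIntegral).isAlgebraic

/-- A maximal algebraically independent subset of `t` makes every element of `t` algebraic. -/
lemma maximal_isAlgebraic {R Ω : Type*} [Field R] [Field Ω] [Algebra R Ω] {t u : Set Ω}
    (hmax : Maximal (fun s : Set Ω =>
      AlgebraicIndependent R ((↑) : s → Ω) ∧ s ⊆ t) u) {z : Ω} (hz : z ∈ t) :
    IsAlgebraic (Algebra.adjoin R u) z := by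
  classical
  by_contra htr
  have hzu : z ∉ u := by
    intro h
    exact htr (isAlgebraic_algebraMap (⟨z, Algebra.subset_adjoin h⟩ : Algebra.adjoin R u))
  have htrans : Transcendental (Algebra.adjoin R (Set.range ((↑) : u → Ω))) z := by
    rwa [Subtype.range_coe]
  have hopt := AlgebraicIndependent.option_iff.mpr ⟨hmax.1.1, htrans⟩
  let e : Option u ≃ ((insert z u : Set Ω)) :=
    (Equiv.optionEquivSumPUnit _).trans (Equiv.Set.insert hzu).symm
  have hcomp : (fun w : (insert z u : Set Ω) => (w : Ω)) ∘ e
      = fun o : Option u => o.elim z (fun i => (i : Ω)) := by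
    funext o
    cases o with
    | none =>
      simp only [e, Function.comp_apply, Equiv.trans_apply,
        Equiv.optionEquivSumPUnit_none, Equiv.Set.insert_symm_apply_inr]
      rfl
    | some i =>
      simp only [e, Function.comp_apply, Equiv.trans_apply,
        Equiv.optionEquivSumPUnit_some, Equiv.Set.insert_symm_apply_inl]
      rfl
  have hins : AlgebraicIndependent R (fun w : (insert z u : Set Ω) => (w : Ω)) :=
    (algebraicIndependent_equiv' e hcomp).mp hopt
  have : (insert z u : Set Ω) ⊆ u :=
    hmax.2 ⟨hins, Set.insert_subset hz hmax.1.2⟩ (Set.subset_insert z u)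
  exact hzu (this (Set.mem_insert z u))

/-- Extend a ring hom on `R` to one on an algebraic extension `Ω₁`, into an
algebraically closed field. -/
lemma extend_hom {R Ω₁ Ω₂ : Type*} [Field R] [Field Ω₁] [Field Ω₂] [IsAlgClosed Ω₂]
    [Algebra R Ω₁] [Algebra.IsAlgebraic R Ω₁] (β : R →+* Ω₂) :
    ∃ ψ : Ω₁ →+* Ω₂, ∀ r : R, ψ (algebraMap R Ω₁ r) = β r := by
  letI : Algebra R Ω₂ := β.toAlgebra
  haveI : Module.IsTorsionFree R Ω₁ :=
    Module.isTorsionFree_iff_algebraMap_injective.mpr (algebraMap R Ω₁).injective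
  haveI : Module.IsTorsionFree R Ω₂ :=
    Module.isTorsionFree_iff_algebraMap_injective.mpr (algebraMap R Ω₂).injective
  exact ⟨(IsAlgClosed.lift : Ω₁ →ₐ[R] Ω₂).toRingHom,
    fun r => (IsAlgClosed.lift : Ω₁ →ₐ[R] Ω₂).commutes r⟩
end Helpers

set_option maxHeartbeats 2000000 in
set_option synthInstance.maxHeartbeats 1000000 in
/-- If every K-conjugation of L (inside a fixed algebraic closure Ω of L,
via an isomorphism fixing K(Δ) for some transcendence basis Δ of L over K) is contained
in L, then for every intermediate field K ⊆ F ⊆ L and every x ∈ L algebraic over F,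
every F-conjugate of x lies in L. -/
theorem conjugations_contained_implies_conjugates_in
    {K Ω : Type*} [Field K] [Field Ω] [Algebra K Ω] [IsAlgClosed Ω]
    (L : IntermediateField K Ω)
    -- Ω is an algebraic closure of L
    (halg : Algebra.IsAlgebraic L Ω)
    -- every K-conjugation of L is contained in L
    (hconj : ∀ (Δ : Set Ω), Δ ⊆ (L : Set Ω) →
      AlgebraicIndependent K ((↑) : Δ → Ω) →
      (∀ x ∈ L, IsAlgebraic (IntermediateField.adjoin K Δ) x) →
      ∀ (L' : IntermediateField K Ω) (σ : L ≃+* L'),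
        (∀ z : L, (z : Ω) ∈ IntermediateField.adjoin K Δ → ((σ z : L') : Ω) = (z : Ω)) →
        L' ≤ L) :
    ∀ (F : IntermediateField K Ω), F ≤ L → ∀ x : Ω, x ∈ L → IsAlgebraic F x →
      ∀ y : Ω, Polynomial.aeval y (minpoly F x) = 0 → y ∈ L := by
  classical
  intro F hFL x hxL hxalg y hy
  -- the set of elements algebraic over F
  set S : Set Ω := {z | IsAlgebraic (↥F) z} with hSdef
  -- the relative algebraic closure of F in Ω
  set Mbar : IntermediateField (↥F) Ω := IntermediateField.adjoin (↥F) S with hMdef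
  haveI hMalginst : Algebra.IsAlgebraic (↥F) Mbar :=
    IntermediateField.isAlgebraic_adjoin (fun s hs => hs.isIntegral)
  have hMbar_alg : ∀ a : Mbar, IsAlgebraic (↥F) (a : Ω) := fun a =>
    (IntermediateField.isAlgebraic_iff).mp (Algebra.IsAlgebraic.isAlgebraic a)
  have hxS : x ∈ S := hxalg
  have hxM : x ∈ Mbar := IntermediateField.subset_adjoin _ _ hxS
  -- an F-embedding of Mbar into Ω sending x to y
  obtain ⟨φ, hφx⟩ := IntermediateField.exists_algHom_adjoin_of_splits_of_aeval
    (F := ↥F) (E := Ω) (K := Ω) (S := S)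
    (fun s hs => ⟨hs.isIntegral, IsAlgClosed.splits _⟩) hxM hy
  -- the image of φ consists of elements algebraic over F
  have hφalg : ∀ a : Mbar, IsAlgebraic (↥F) (φ a) := by
    intro a
    obtain ⟨p, hp0, hpa⟩ := Algebra.IsAlgebraic.isAlgebraic (R := ↥F) a
    exact ⟨p, hp0, by rw [Polynomial.aeval_algHom_apply, hpa, map_zero]⟩
  -- φ as a ring endomorphism of Mbar
  let τ : Mbar →+* Mbar :=
    { toFun := fun a => ⟨φ a, IntermediateField.subset_adjoin _ _ (hφalg a)⟩
      map_one' := Subtype.ext (map_one φ)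
      map_mul' := fun a b => Subtype.ext (map_mul φ a b)
      map_zero' := Subtype.ext (map_zero φ)
      map_add' := fun a b => Subtype.ext (map_add φ a b) }
  have hτinj : Function.Injective τ := by
    intro a b hab
    have : φ a = φ b := congrArg Subtype.val hab
    exact φ.toRingHom.injective this
  -- a maximal algebraically independent (over Mbar) subset Δ of L
  obtain ⟨Δ, -, hΔmax⟩ := exists_maximal_algebraicIndependent (R := ↥Mbar) (A := Ω)
    (∅ : Set Ω) (↑L : Set Ω) (Set.empty_subset _) algebraicIndependent_empty
  have hΔ : AlgebraicIndependent (↥Mbar) ((↑) : Δ → Ω) := hΔmax.1.1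
  have hΔL : Δ ⊆ (↑L : Set Ω) := hΔmax.1.2
  have hLalgΔ : ∀ z ∈ (↑L : Set Ω), IsAlgebraic (Algebra.adjoin (↥Mbar) Δ) z :=
    fun z hz => maximal_isAlgebraic hΔmax hz
  -- B = Mbar(Δ)
  set B : IntermediateField (↥Mbar) Ω :=
    IntermediateField.adjoin (↥Mbar) (Set.range ((↑) : Δ → Ω)) with hBdef
  have hΔB : ∀ d ∈ Δ, d ∈ B := fun d hd =>
    IntermediateField.subset_adjoin _ _ ⟨⟨d, hd⟩, rfl⟩
  -- the twisted evaluation homomorphism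
  let g : MvPolynomial Δ (↥Mbar) →+* Ω :=
    (MvPolynomial.aeval (R := ↥Mbar) ((↑) : Δ → Ω)).toRingHom.comp
      (MvPolynomial.map τ)
  have hginj : Function.Injective g := by
    have h1 := (algebraicIndependent_iff_injective_aeval.mp hΔ).comp
      (MvPolynomial.map_injective τ hτinj)
    simpa [g, RingHom.coe_comp] using h1
  let ghat : FractionRing (MvPolynomial Δ (↥Mbar)) →+* Ω := IsFractionRing.lift hginj
  let e := hΔ.aevalEquivField
  -- β : B →+* Ω  extending φ and fixing Δ
  let β : (↥B) →+* Ω := ghat.comp e.symm.toAlgHom.toRingHom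
  have hβscal : ∀ a : ↥Mbar, β (algebraMap (↥Mbar) (↥B) a) = φ a := by
    intro a
    have h1 : e (algebraMap (MvPolynomial Δ (↥Mbar)) _ (MvPolynomial.C a))
        = algebraMap (↥Mbar) (↥B) a := by
      apply Subtype.ext
      rw [hΔ.aevalEquivField_algebraMap_apply_coe]
      rw [MvPolynomial.aeval_C]
      rfl
    have h2 : e.symm (algebraMap (↥Mbar) (↥B) a)
        = algebraMap (MvPolynomial Δ (↥Mbar)) _ (MvPolynomial.C a) := by
      rw [← h1, AlgEquiv.symm_apply_apply]
    show ghat (e.symm _) = φ a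
    rw [h2, IsFractionRing.lift_algebraMap]
    show (MvPolynomial.aeval ((↑) : Δ → Ω)) (MvPolynomial.map τ (MvPolynomial.C a)) = φ a
    rw [MvPolynomial.map_C, MvPolynomial.aeval_C]
    rfl
  have hβΔ : ∀ (d : Ω) (hd : d ∈ Δ), β ⟨d, hΔB d hd⟩ = d := by
    intro d hd
    have h1 : e (algebraMap (MvPolynomial Δ (↥Mbar)) _ (MvPolynomial.X ⟨d, hd⟩))
        = ⟨d, hΔB d hd⟩ := by
      apply Subtype.ext
      rw [hΔ.aevalEquivField_algebraMap_apply_coe]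
      simp
    have h2 : e.symm ⟨d, hΔB d hd⟩
        = algebraMap (MvPolynomial Δ (↥Mbar)) _ (MvPolynomial.X ⟨d, hd⟩) := by
      rw [← h1, AlgEquiv.symm_apply_apply]
    show ghat (e.symm _) = d
    rw [h2, IsFractionRing.lift_algebraMap]
    show (MvPolynomial.aeval ((↑) : Δ → Ω)) (MvPolynomial.map τ (MvPolynomial.X ⟨d, hd⟩)) = d
    rw [MvPolynomial.map_X, MvPolynomial.aeval_X]
  -- Ω is algebraic over B
  haveI hBalg : Algebra.IsAlgebraic (↥B) Ω := by
    constructor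
    intro ω
    have h1 : IsAlgebraic (↥L) ω := Algebra.IsAlgebraic.isAlgebraic ω
    have h2 : IsAlgebraic (IntermediateField.adjoin (↥B) (↑L : Set Ω)) ω := by
      refine pushAlg (algebraMap (↥L) Ω).injective ?_ h1
      intro a
      exact ⟨⟨(a : Ω), IntermediateField.subset_adjoin _ _ a.2⟩, rfl⟩
    refine algTrans ?_ h2
    intro z hz
    have h3 : IsAlgebraic (Algebra.adjoin (↥Mbar) Δ) z := hLalgΔ z hz
    have h4 : IsAlgebraic (↥B) z := by
      refine pushAlg ?_ ?_ h3
      · intro a b hab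
        exact Subtype.ext hab
      intro a
      obtain ⟨aval, ha⟩ := a
      have hmem : aval ∈ B := by
        induction ha using Algebra.adjoin_induction with
        | mem w hw => exact hΔB w hw
        | algebraMap r => exact B.algebraMap_mem r
        | add u v _ _ hu hv => exact B.add_mem hu hv
        | mul u v _ _ hu hv => exact B.mul_mem hu hv
      exact ⟨⟨aval, hmem⟩, rfl⟩
    exact h4.isIntegral
  -- extend β to a ring endomorphism ψ of Ω
  obtain ⟨ψ, hψ⟩ := extend_hom (R := ↥B) (Ω₁ := Ω) (Ω₂ := Ω) β
  have hψMbar : ∀ m : ↥Mbar, ψ (m : Ω) = φ m := by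
    intro m
    have h1 : (m : Ω) = algebraMap (↥B) Ω (algebraMap (↥Mbar) (↥B) m) := rfl
    rw [h1, hψ, hβscal]
  have hψΔ : ∀ d ∈ Δ, ψ d = d := by
    intro d hd
    have h1 : d = algebraMap (↥B) Ω (⟨d, hΔB d hd⟩ : ↥B) := rfl
    conv_lhs => rw [h1]
    rw [hψ]
    exact hβΔ d hd
  have hψF : ∀ c ∈ F, ψ c = c := by
    intro c hc
    have hcS : c ∈ S := isAlgebraic_algebraMap (⟨c, hc⟩ : ↥F)
    have hcM : c ∈ Mbar := IntermediateField.subset_adjoin _ _ hcS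
    have h1 := hψMbar ⟨c, hcM⟩
    have h2 : (⟨c, hcM⟩ : ↥Mbar) = algebraMap (↥F) (↥Mbar) ⟨c, hc⟩ := rfl
    rw [h1, h2, φ.commutes]
    rfl
  have hψx : ψ x = y := by
    have h1 := hψMbar ⟨x, hxM⟩
    rw [h1, hφx]
  -- ψ as a K-algebra endomorphism
  have hψK : ∀ c : K, ψ (algebraMap K Ω c) = algebraMap K Ω c := fun c =>
    hψF _ (F.algebraMap_mem c)
  let ψa : Ω →ₐ[K] Ω := { toRingHom := ψ, commutes' := hψK }
  -- the set of elements fixed by ψ, as intermediate field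
  let Fix : IntermediateField K Ω :=
    { toSubalgebra := AlgHom.equalizer ψa (AlgHom.id K Ω)
      inv_mem' := by
        intro w hw
        have hw' : ψ w = w := hw
        show ψ w⁻¹ = w⁻¹
        rw [map_inv₀, hw'] }
  have hFixF : (↑F : Set Ω) ⊆ (↑Fix : Set Ω) := fun c hc => hψF c hc
  have hFixΔ : Δ ⊆ (↑Fix : Set Ω) := fun d hd => hψΔ d hd
  -- a maximal algebraically independent (over K) subset of F ∪ Δ
  obtain ⟨Δs, -, hΔsmax⟩ := exists_maximal_algebraicIndependent (R := K) (A := Ω)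
    (∅ : Set Ω) ((↑F : Set Ω) ∪ Δ) (Set.empty_subset _) algebraicIndependent_empty
  have hΔs : AlgebraicIndependent K ((↑) : Δs → Ω) := hΔsmax.1.1
  have hΔssub : Δs ⊆ (↑F : Set Ω) ∪ Δ := hΔsmax.1.2
  set Es : IntermediateField K Ω := IntermediateField.adjoin K Δs with hEsdef
  have hFΔalg : ∀ z ∈ (↑F : Set Ω) ∪ Δ, IsAlgebraic (↥Es) z := by
    intro z hz
    have h1 : IsAlgebraic (Algebra.adjoin K Δs) z := maximal_isAlgebraic hΔsmax hz
    refine pushAlg ?_ ?_ h1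
    · intro a b hab
      exact Subtype.ext hab
    intro a
    exact ⟨⟨(a : Ω), IntermediateField.algebra_adjoin_le_adjoin K Δs a.2⟩, rfl⟩
  -- every element of L is algebraic over Es
  have halgΔs : ∀ z ∈ L, IsAlgebraic (↥Es) z := by
    intro z hz
    have hMEs : ∀ m ∈ (Mbar : Set Ω), IsAlgebraic (↥Es) m := by
      intro m hm
      have h1 : IsAlgebraic (↥F) m := hMbar_alg ⟨m, hm⟩
      have h2 : IsAlgebraic (IntermediateField.adjoin (↥Es) (↑F : Set Ω)) m := by
        refine pushAlg (algebraMap (↥F) Ω).injective ?_ h1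
        intro a
        exact ⟨⟨(a : Ω), IntermediateField.subset_adjoin _ _ a.2⟩, rfl⟩
      exact algTrans (fun t ht => (hFΔalg t (Or.inl ht)).isIntegral) h2
    have h3 : IsAlgebraic (Algebra.adjoin (↥Mbar) Δ) z := hLalgΔ z hz
    have h4 : IsAlgebraic
        (IntermediateField.adjoin (↥Es) ((Mbar : Set Ω) ∪ Δ)) z := by
      refine pushAlg ?_ ?_ h3
      · intro a b hab
        exact Subtype.ext hab
      intro a
      obtain ⟨aval, ha⟩ := a
      have hmem : aval ∈ IntermediateField.adjoin (↥Es) ((Mbar : Set Ω) ∪ Δ) := by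
        induction ha using Algebra.adjoin_induction with
        | mem w hw => exact IntermediateField.subset_adjoin _ _ (Or.inr hw)
        | algebraMap r => exact IntermediateField.subset_adjoin _ _ (Or.inl r.2)
        | add u v _ _ hu hv => exact add_mem hu hv
        | mul u v _ _ hu hv => exact mul_mem hu hv
      exact ⟨⟨aval, hmem⟩, rfl⟩
    refine algTrans ?_ h4
    rintro t (ht | ht)
    · exact (hMEs t ht).isIntegral
    · exact (hFΔalg t (Or.inr ht)).isIntegral
  -- the conjugation L' and the isomorphism σ
  let χ : (↥L) →ₐ[K] Ω := ψa.comp L.val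
  set L' : IntermediateField K Ω := χ.fieldRange with hL'def
  let σ : (↥L) ≃+* (↥L') := (AlgEquiv.ofInjectiveField χ).toRingEquiv
  have hσ : ∀ z : ↥L, ((σ z : ↥L') : Ω) = χ z := fun z => rfl
  -- Es fixes everything
  have hEsFix : Es ≤ Fix := by
    rw [hEsdef]
    apply IntermediateField.adjoin_le_iff.mpr
    intro d hd
    rcases hΔssub hd with h | h
    · exact hFixF h
    · exact hFixΔ h
  have hfix : ∀ z : ↥L, (z : Ω) ∈ IntermediateField.adjoin K Δs →
      ((σ z : ↥L') : Ω) = (z : Ω) := by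
    intro z hz
    rw [hσ]
    exact hEsFix hz
  -- apply the hypothesis
  have hΔsL : Δs ⊆ (L : Set Ω) := fun d hd => by
    rcases hΔssub hd with h | h
    · exact hFL h
    · exact hΔL h
  have hL'L : L' ≤ L := hconj Δs hΔsL hΔs (fun w hw => halgΔs w hw) L' σ hfix
  -- conclude
  have hyL' : y ∈ L' := by
    refine ⟨⟨x, hxL⟩, ?_⟩
    show ψ x = y
    exact hψx
  exact hL'L hyL'
end
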